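/- The number of partitions λ_1 ≥ λ_2 ≥ ... ≥ λ_k ≥ 0 of n satisfying λ_i ≥ λ_{i+1} + λ_{i+2} for all 1 ≤ i ≤ k (with λ_j = 0 for j > k) equals the number of partitions of n into parts from the set {F_2 - 1, F_3 - 1, ..., F_{k+1} - 1}, where F_0 = F_1 = 1 and F_i = F_{i-1} + F_{i-2}. Equivalently, the generating function is Π_{i=2}^{k+1} (1 - q^{F_i - 1})^{-1}. -/

import Mathlib

open Finset

private def Phi (k : ℕ) (s : Fin k → ℕ) : ℕ → ℕ :=
  fun j => ∑ i : Fin k, s i * Nat.fib ((i : ℕ) + 1 - j)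

private lemma sumfib (m : ℕ) : ∑ j ∈ Finset.range m, Nat.fib (j + 1) = Nat.fib (m + 2) - 1 := by
  induction m with
  | zero => simp
  | succ m ih =>
    rw [Finset.sum_range_succ, ih]
    have h1 : Nat.fib (m + 3) = Nat.fib (m + 1) + Nat.fib (m + 2) := Nat.fib_add_two
    have h2 : 1 ≤ Nat.fib (m + 2) := Nat.fib_pos.mpr (by omega)
    have h3 : m + 1 + 2 = m + 3 := by omega
    rw [h3]
    omega

private lemma fibkey (i j : ℕ) :
    Nat.fib (i + 1 - j) = Nat.fib (i - j) + Nat.fib (i - 1 - j) + (if i = j then 1 else 0) := by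
  rcases lt_trichotomy i j with h | h | h
  · have e1 : i + 1 - j = 0 := by omega
    have e2 : i - j = 0 := by omega
    have e3 : i - 1 - j = 0 := by omega
    rw [e1, e2, e3, if_neg (by omega)]
    simp
  · subst h
    have e1 : i + 1 - i = 1 := by omega
    have e2 : i - i = 0 := by omega
    have e3 : i - 1 - i = 0 := by omega
    rw [e1, e2, e3, if_pos rfl]
    simp
  · obtain ⟨d, rfl⟩ : ∃ d, i = j + d + 1 := ⟨i - j - 1, by omega⟩
    have e1 : j + d + 1 + 1 - j = d + 2 := by omega
    have e2 : j + d + 1 - j = d + 1 := by omega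
    have e3 : j + d + 1 - 1 - j = d := by omega
    rw [e1, e2, e3, if_neg (by omega), Nat.fib_add_two]
    omega

private lemma phi_zero (k : ℕ) (s : Fin k → ℕ) (j : ℕ) (hj : k ≤ j) : Phi k s j = 0 := by
  apply Finset.sum_eq_zero
  intro i _
  have : (i : ℕ) + 1 - j = 0 := by omega
  rw [this]
  simp

private lemma phi_rec (k : ℕ) (s : Fin k → ℕ) (j : ℕ) (hj : j < k) :
    Phi k s j = s ⟨j, hj⟩ + Phi k s (j + 1) + Phi k s (j + 2) := by
  unfold Phi
  have step : ∀ i : Fin k, s i * Nat.fib ((i : ℕ) + 1 - j) =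
      (if i = (⟨j, hj⟩ : Fin k) then s i else 0)
        + s i * Nat.fib ((i : ℕ) + 1 - (j + 1)) + s i * Nat.fib ((i : ℕ) + 1 - (j + 2)) := by
    intro i
    have e1 : (i : ℕ) + 1 - (j + 1) = (i : ℕ) - j := by omega
    have e2 : (i : ℕ) + 1 - (j + 2) = (i : ℕ) - 1 - j := by omega
    rw [e1, e2, fibkey (i : ℕ) j]
    rcases eq_or_ne i (⟨j, hj⟩ : Fin k) with h | h
    · rw [if_pos h]
      have : (i : ℕ) = j := by rw [h]
      rw [if_pos this]
      ring
    · rw [if_neg h]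
      have : (i : ℕ) ≠ j := fun hc => h (Fin.ext hc)
      rw [if_neg this]
      ring
  rw [Finset.sum_congr rfl (fun i _ => step i), Finset.sum_add_distrib,
    Finset.sum_add_distrib, Finset.sum_ite_eq' Finset.univ (⟨j, hj⟩ : Fin k) s]
  simp

private lemma phi_sum (k : ℕ) (s : Fin k → ℕ) :
    ∑ j ∈ Finset.range k, Phi k s j = ∑ i : Fin k, (Nat.fib ((i : ℕ) + 3) - 1) * s i := by
  unfold Phi
  rw [Finset.sum_comm]
  apply Finset.sum_congr rfl
  intro i _
  rw [← Finset.mul_sum]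
  have hsub : Finset.range ((i : ℕ) + 1) ⊆ Finset.range k := by
    apply Finset.range_subset_range.mpr
    omega
  have h1 : ∑ j ∈ Finset.range k, Nat.fib ((i : ℕ) + 1 - j)
      = ∑ j ∈ Finset.range ((i : ℕ) + 1), Nat.fib ((i : ℕ) + 1 - j) := by
    symm
    apply Finset.sum_subset hsub
    intro j _ hj
    simp only [Finset.mem_range, not_lt] at hj
    have : (i : ℕ) + 1 - j = 0 := by omega
    rw [this]; simp
  have h2 : ∑ j ∈ Finset.range ((i : ℕ) + 1), Nat.fib ((i : ℕ) + 1 - j)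
      = ∑ j ∈ Finset.range ((i : ℕ) + 1), Nat.fib (j + 1) := by
    rw [← Finset.sum_range_reflect (fun j => Nat.fib (j + 1)) ((i : ℕ) + 1)]
    apply Finset.sum_congr rfl
    intro j hj
    simp only [Finset.mem_range] at hj
    congr 1
    omega
  rw [h1, h2, sumfib]
  have : (i : ℕ) + 1 + 2 = (i : ℕ) + 3 := by omega
  rw [this, mul_comm]

private lemma phi_inj (k : ℕ) : Function.Injective (Phi k) := by
  intro s s' h
  funext i
  have hi := i.isLt
  have h1 := phi_rec k s i hi
  have h2 := phi_rec k s' i hi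
  have e : Phi k s (i : ℕ) = Phi k s' (i : ℕ) := by rw [h]
  have e1 : Phi k s ((i : ℕ) + 1) = Phi k s' ((i : ℕ) + 1) := by rw [h]
  have e2 : Phi k s ((i : ℕ) + 2) = Phi k s' ((i : ℕ) + 2) := by rw [h]
  have : s ⟨(i : ℕ), hi⟩ = s' ⟨(i : ℕ), hi⟩ := by omega
  simpa using this

/-- partitions of `n` into at most `k` parts with `λᵢ ≥ λ_{i+1} + λ_{i+2}`
are equinumerous with partitions of `n` into parts `F_i - 1`, `i = 2,…,k+1`, where
`F₀ = F₁ = 1` are the Fibonacci numbers (so `F_i = Nat.fib (i+1)`). -/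
theorem stmt_7 (k n : ℕ) :
    {lam : ℕ → ℕ | Antitone lam ∧ (∀ j, k ≤ j → lam j = 0) ∧
      (∀ i < k, lam (i + 1) + lam (i + 2) ≤ lam i) ∧
      ∑ j ∈ Finset.range k, lam j = n}.ncard =
    {s : Fin k → ℕ | ∑ i : Fin k, (Nat.fib ((i : ℕ) + 3) - 1) * s i = n}.ncard := by
  have himg : {lam : ℕ → ℕ | Antitone lam ∧ (∀ j, k ≤ j → lam j = 0) ∧
      (∀ i < k, lam (i + 1) + lam (i + 2) ≤ lam i) ∧
      ∑ j ∈ Finset.range k, lam j = n}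
      = Phi k '' {s : Fin k → ℕ | ∑ i : Fin k, (Nat.fib ((i : ℕ) + 3) - 1) * s i = n} := by
    ext lam
    constructor
    · rintro ⟨hmono, hzero, hcond, hsum⟩
      set s : Fin k → ℕ := fun i => lam (i : ℕ) - lam ((i : ℕ) + 1) - lam ((i : ℕ) + 2) with hs
      have key : ∀ d j, k ≤ j + d → Phi k s j = lam j := by
        intro d
        induction d with
        | zero =>
          intro j hj
          rw [phi_zero k s j (by omega), hzero j (by omega)]
        | succ d ih =>
          intro j hj
          by_cases hjk : j < k
          · rw [phi_rec k s j hjk, ih (j + 1) (by omega), ih (j + 2) (by omega)]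
            have hc := hcond j hjk
            show (lam j - lam (j + 1) - lam (j + 2)) + lam (j + 1) + lam (j + 2) = lam j
            omega
          · rw [phi_zero k s j (by omega), hzero j (by omega)]
      have hPhi : Phi k s = lam := by
        funext j
        exact key k j (by omega)
      refine ⟨s, ?_, hPhi⟩
      show ∑ i : Fin k, (Nat.fib ((i : ℕ) + 3) - 1) * s i = n
      rw [← phi_sum k s, hPhi, hsum]
    · rintro ⟨s, hsmem, rfl⟩
      refine ⟨?_, ?_, ?_, ?_⟩
      · apply antitone_nat_of_succ_le
        intro j
        apply Finset.sum_le_sum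
        intro i _
        exact Nat.mul_le_mul_left _ (Nat.fib_mono (by omega))
      · intro j hj
        exact phi_zero k s j hj
      · intro j hjk
        rw [phi_rec k s j hjk]
        omega
      · rw [phi_sum k s]
        exact hsmem
  rw [himg]
  exact Set.ncard_image_of_injective _ (phi_inj k)
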